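/- Let T be an invertible mn×mn Toeplitz-block-Toeplitz matrix and let 𝐓 denote the 9-vector of bivariate polynomials (T̃(x,y), x^m, x^{2m}−1, y^n, x^m y^n, (x^{2m}−1)y^n, y^{2n}−1, x^m(y^{2n}−1), (x^{2m}−1)(y^{2n}−1)). Then the only syzygy (h₁,…,h₉) of 𝐓 with every h_i of degree ≤ m−1 in x and ≤ n−1 in y is the zero syzygy. -/

import Mathlib

open MvPolynomial Finset

/-- The bivariate polynomial `T̃(x,y)` associated to a Toeplitz-block-Toeplitz matrix. -/
noncomputable def Ttilde2 {K : Type*} [Field K] (m n : ℕ) (t : ℤ × ℤ → K) :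
    MvPolynomial (Fin 2) K :=
  ∑ i ∈ Finset.range (2 * m), ∑ j ∈ Finset.range (2 * n),
    MvPolynomial.C (t (if i < m then (i : ℤ) else (i : ℤ) - 2 * m,
        if j < n then (j : ℤ) else (j : ℤ) - 2 * n)) * X 0 ^ i * X 1 ^ j

/-- The vector `𝐓 = (T̃(x,y), x^m, x^{2m}-1, y^n, x^m y^n, (x^{2m}-1) y^n, y^{2n}-1,
 x^m (y^{2n}-1), (x^{2m}-1)(y^{2n}-1))`. -/
noncomputable def Tvec {K : Type*} [Field K] (m n : ℕ) (t : ℤ × ℤ → K) :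
    Fin 9 → MvPolynomial (Fin 2) K :=
  ![Ttilde2 m n t, X 0 ^ m, X 0 ^ (2 * m) - 1, X 1 ^ n, X 0 ^ m * X 1 ^ n,
    (X 0 ^ (2 * m) - 1) * X 1 ^ n, X 1 ^ (2 * n) - 1, X 0 ^ m * (X 1 ^ (2 * n) - 1),
    (X 0 ^ (2 * m) - 1) * (X 1 ^ (2 * n) - 1)]

/-! ### Auxiliary infrastructure -/

/-- The exponent vector `x^i y^j` as an element of `Fin 2 →₀ ℕ`. -/
noncomputable def dd (i j : ℕ) : Fin 2 →₀ ℕ := Finsupp.single 0 i + Finsupp.single 1 j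

lemma dd_apply0 (i j : ℕ) : dd i j 0 = i := by simp [dd]
lemma dd_apply1 (i j : ℕ) : dd i j 1 = j := by simp [dd, Finsupp.single_apply]

lemma dd_eta (d : Fin 2 →₀ ℕ) : dd (d 0) (d 1) = d := by
  ext x
  fin_cases x
  · simp [dd]
  · simp [dd, Finsupp.single_apply]

lemma dd_sub0 (i j a : ℕ) : dd i j - Finsupp.single 0 a = dd (i - a) j := by
  ext x
  fin_cases x <;> simp [dd, Finsupp.single_apply]

lemma dd_sub1 (i j b : ℕ) : dd i j - Finsupp.single 1 b = dd i (j - b) := by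
  ext x
  fin_cases x <;> simp [dd, Finsupp.single_apply]

lemma keyX0 {K : Type*} [CommSemiring K] (a i j : ℕ) (P : MvPolynomial (Fin 2) K) :
    coeff (dd i j) (X 0 ^ a * P) = if a ≤ i then coeff (dd (i - a) j) P else 0 := by
  rw [X_pow_eq_monomial, coeff_monomial_mul']
  rw [dd_sub0]
  simp only [Finsupp.single_le_iff, dd_apply0, one_mul]

lemma keyX1 {K : Type*} [CommSemiring K] (b i j : ℕ) (P : MvPolynomial (Fin 2) K) :
    coeff (dd i j) (X 1 ^ b * P) = if b ≤ j then coeff (dd i (j - b)) P else 0 := by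
  rw [X_pow_eq_monomial, coeff_monomial_mul']
  rw [dd_sub1]
  simp only [Finsupp.single_le_iff, dd_apply1, one_mul]

lemma eq_zero_of_dd {K : Type*} [CommSemiring K] (Q : MvPolynomial (Fin 2) K)
    (hQ : ∀ a b, coeff (dd a b) Q = 0) : Q = 0 := by
  refine MvPolynomial.ext _ _ fun d => ?_
  rw [coeff_zero, ← dd_eta d]
  exact hQ _ _

lemma if_sum {α M : Type*} [AddCommMonoid M] (c : Prop) [Decidable c] (s : Finset α)
    (f : α → M) : (∑ x ∈ s, if c then f x else 0) = if c then ∑ x ∈ s, f x else 0 := by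
  split_ifs <;> simp

lemma sum9 {M : Type*} [AddCommMonoid M] (f : Fin 9 → M) :
    ∑ i, f i = f 0 + f 1 + f 2 + f 3 + f 4 + f 5 + f 6 + f 7 + f 8 := by
  rw [show (Finset.univ : Finset (Fin 9)) = {0,1,2,3,4,5,6,7,8} from rfl]
  simp [Finset.sum_insert, Finset.mem_insert]
  abel

/-- One-dimensional "folding" identity used for reduction modulo `x^{2m} - 1`. -/
lemma oneD {M : Type*} [AddCommMonoid M] (m i : ℕ) (hm : 0 < m) (hi : i < m)
    (e : ℕ → ℤ) (he1 : ∀ p, p < m → e p = p)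
    (he2 : ∀ p, m ≤ p → p < 2 * m → e p = (p : ℤ) - 2 * m)
    (G : ℤ → ℕ → M) (hG : ∀ a k, m ≤ k → G a k = 0) :
    ∑ p ∈ Finset.range (2 * m),
      ((if p ≤ i then G (e p) (i - p) else 0) +
       (if p ≤ i + 2 * m then G (e p) (i + 2 * m - p) else 0))
    = ∑ k ∈ Finset.range m, G ((i : ℤ) - (k : ℤ)) k := by
  set g : ℕ → M := fun p =>
    (if p ≤ i then G (e p) (i - p) else 0) +
    (if p ≤ i + 2 * m then G (e p) (i + 2 * m - p) else 0) with hg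
  set φ : ℕ → ℕ := fun k => if k ≤ i then i - k else i + 2 * m - k with hφ
  have hφinj : ∀ k ∈ Finset.range m, ∀ k' ∈ Finset.range m, φ k = φ k' → k = k' := by
    intro k hk k' hk' hkk'
    simp only [mem_range] at hk hk'
    simp only [hφ] at hkk'
    split_ifs at hkk' <;> omega
  have h1 : ∑ k ∈ Finset.range m, G ((i : ℤ) - (k : ℤ)) k
      = ∑ k ∈ Finset.range m, g (φ k) := by
    refine Finset.sum_congr rfl fun k hk => ?_
    simp only [mem_range] at hk
    rcases le_or_gt k i with hki | hki
    · have hφk : φ k = i - k := if_pos hki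
      have hc : (↑(i - k) : ℤ) = (i : ℤ) - k := by omega
      rw [hφk, hg]
      simp only
      rw [if_pos (by omega), if_pos (by omega), he1 _ (by omega), hc,
        show i - (i - k) = k by omega, hG _ (i + 2 * m - (i - k)) (by omega), add_zero]
    · have hφk : φ k = i + 2 * m - k := if_neg (by omega)
      rw [hφk, hg]
      simp only
      rw [if_neg (by omega), if_pos (by omega), he2 _ (by omega) (by omega),
        show i + 2 * m - (i + 2 * m - k) = k by omega, zero_add]
      congr 1
      omega
  have h2 : ∑ k ∈ Finset.range m, g (φ k) = ∑ p ∈ (Finset.range m).image φ, g p :=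
    (Finset.sum_image hφinj).symm
  have h3 : ∑ p ∈ (Finset.range m).image φ, g p = ∑ p ∈ Finset.range (2 * m), g p := by
    refine Finset.sum_subset ?_ ?_
    · intro p hp
      simp only [Finset.mem_image, mem_range, hφ] at hp ⊢
      obtain ⟨k, hk, rfl⟩ := hp
      split_ifs <;> omega
    · intro p hp hpn
      simp only [Finset.mem_image, mem_range, hφ] at hpn hp
      have h1' : ¬ p ≤ i := by
        intro hpi
        exact hpn ⟨i - p, by omega, by rw [if_pos (by omega)]; omega⟩
      rw [hg]
      simp only
      rw [if_neg h1']
      have h2' : (if p ≤ i + 2 * m then G (e p) (i + 2 * m - p) else 0) = 0 := by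
        split_ifs with hc
        · rcases le_or_gt m (i + 2 * m - p) with hge | hlt
          · exact hG _ _ hge
          · exact absurd ⟨i + 2 * m - p, by omega, by rw [if_neg (by omega)]; omega⟩ hpn
        · rfl
      rw [h2', zero_add]
  exact (h1.trans (h2.trans h3)).symm

/-- Coefficients of `T̃ · h₀`. -/
lemma hPco {K : Type*} [Field K] (m n : ℕ) (t : ℤ × ℤ → K) (h0 : MvPolynomial (Fin 2) K)
    (a b : ℕ) :
    coeff (dd a b) (Ttilde2 m n t * h0)
    = ∑ p ∈ Finset.range (2 * m), ∑ q ∈ Finset.range (2 * n),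
        (if p ≤ a then
          (if q ≤ b then
            t (if p < m then (p : ℤ) else (p : ℤ) - 2 * m,
               if q < n then (q : ℤ) else (q : ℤ) - 2 * n) *
              coeff (dd (a - p) (b - q)) h0
           else 0)
         else 0) := by
  rw [Ttilde2, Finset.sum_mul, coeff_sum]
  refine Finset.sum_congr rfl fun p _ => ?_
  rw [Finset.sum_mul, coeff_sum]
  refine Finset.sum_congr rfl fun q _ => ?_
  rw [mul_assoc, mul_assoc, coeff_C_mul, keyX0]
  rw [mul_ite, mul_zero]
  rcases le_or_gt p a with hp | hp
  · rw [if_pos hp, if_pos hp, keyX1, mul_ite, mul_zero]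
  · rw [if_neg (by omega), if_neg (by omega)]

/-- Folding the coefficients of `T̃ · h₀` at the four points
`(i,j), (i,j+2n), (i+2m,j), (i+2m,j+2n)` produces the Toeplitz bilinear form. -/
lemma stepA {K : Type*} [Field K] (m n : ℕ) (hm : 0 < m) (hn : 0 < n) (t : ℤ × ℤ → K)
    (h0 : MvPolynomial (Fin 2) K)
    (hvx : ∀ a b, m ≤ a → coeff (dd a b) h0 = 0)
    (hvy : ∀ a b, n ≤ b → coeff (dd a b) h0 = 0)
    (i j : ℕ) (hi : i < m) (hj : j < n) :
    (coeff (dd i j) (Ttilde2 m n t * h0) + coeff (dd i (j + 2 * n)) (Ttilde2 m n t * h0))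
    + (coeff (dd (i + 2 * m) j) (Ttilde2 m n t * h0)
       + coeff (dd (i + 2 * m) (j + 2 * n)) (Ttilde2 m n t * h0))
    = ∑ k ∈ Finset.range m, ∑ l ∈ Finset.range n,
        t ((i : ℤ) - (k : ℤ), (j : ℤ) - (l : ℤ)) * coeff (dd k l) h0 := by
  have key1 : (coeff (dd i j) (Ttilde2 m n t * h0)
        + coeff (dd i (j + 2 * n)) (Ttilde2 m n t * h0))
      + (coeff (dd (i + 2 * m) j) (Ttilde2 m n t * h0)
        + coeff (dd (i + 2 * m) (j + 2 * n)) (Ttilde2 m n t * h0))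
      = ∑ p ∈ Finset.range (2 * m),
          ((if p ≤ i then
              (∑ q ∈ Finset.range (2 * n),
                ((if q ≤ j then
                    t (if p < m then (p : ℤ) else (p : ℤ) - 2 * m,
                       if q < n then (q : ℤ) else (q : ℤ) - 2 * n) *
                      coeff (dd (i - p) (j - q)) h0
                  else 0) +
                 (if q ≤ j + 2 * n then
                    t (if p < m then (p : ℤ) else (p : ℤ) - 2 * m,
                       if q < n then (q : ℤ) else (q : ℤ) - 2 * n) *
                      coeff (dd (i - p) (j + 2 * n - q)) h0
                  else 0)))
            else 0) +
           (if p ≤ i + 2 * m then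
              (∑ q ∈ Finset.range (2 * n),
                ((if q ≤ j then
                    t (if p < m then (p : ℤ) else (p : ℤ) - 2 * m,
                       if q < n then (q : ℤ) else (q : ℤ) - 2 * n) *
                      coeff (dd (i + 2 * m - p) (j - q)) h0
                  else 0) +
                 (if q ≤ j + 2 * n then
                    t (if p < m then (p : ℤ) else (p : ℤ) - 2 * m,
                       if q < n then (q : ℤ) else (q : ℤ) - 2 * n) *
                      coeff (dd (i + 2 * m - p) (j + 2 * n - q)) h0
                  else 0)))
            else 0)) := by
    simp only [hPco]
    rw [← Finset.sum_add_distrib, ← Finset.sum_add_distrib, ← Finset.sum_add_distrib]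
    refine Finset.sum_congr rfl fun p _ => ?_
    rw [if_sum (p ≤ i), if_sum (p ≤ i), if_sum (p ≤ i + 2 * m), if_sum (p ≤ i + 2 * m)]
    split_ifs <;> simp [Finset.sum_add_distrib]
  rw [key1]
  rw [oneD m i hm hi _ (fun p hp => if_pos hp) (fun p h1 h2 => if_neg (by omega))
    (fun a k => ∑ q ∈ Finset.range (2 * n),
      ((if q ≤ j then t (a, if q < n then (q : ℤ) else (q : ℤ) - 2 * n) *
          coeff (dd k (j - q)) h0 else 0) +
       (if q ≤ j + 2 * n then t (a, if q < n then (q : ℤ) else (q : ℤ) - 2 * n) *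
          coeff (dd k (j + 2 * n - q)) h0 else 0)))
    (by
      intro a k hk
      refine Finset.sum_eq_zero fun q _ => ?_
      rw [hvx _ _ hk, hvx _ _ hk]
      split_ifs <;> simp)]
  refine Finset.sum_congr rfl fun k hk => ?_
  rw [oneD n j hn hj _ (fun q hq => if_pos hq) (fun q h1 h2 => if_neg (by omega))
    (fun b l => t ((i : ℤ) - (k : ℤ), b) * coeff (dd k l) h0)
    (by intro b l hl; beta_reduce; rw [hvy _ _ hl, mul_zero])]

/-- If the Toeplitz-block-Toeplitz matrix `T` is invertible, the only syzygy
`(h₁,…,h₉)` of `𝐓` with every `hᵢ` of degree `≤ m-1` in `x` and `≤ n-1` in `y`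
is the zero syzygy. -/
theorem stmt_17 {K : Type*} [Field K] (m n : ℕ) (hm : 0 < m) (hn : 0 < n)
    (t : ℤ × ℤ → K)
    (T : Matrix (Fin m × Fin n) (Fin m × Fin n) K)
    (hT : T = Matrix.of fun α β : Fin m × Fin n =>
      t ((α.1 : ℤ) - (β.1 : ℤ), (α.2 : ℤ) - (β.2 : ℤ)))
    (hTinv : IsUnit T)
    (h : Fin 9 → MvPolynomial (Fin 2) K)
    (hdeg : ∀ i, (h i).degreeOf 0 < m ∧ (h i).degreeOf 1 < n)
    (hsyz : ∑ i, Tvec m n t i * h i = 0) :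
    h = 0 := by
  classical
  -- coefficient vanishing from the degree bounds
  have hvx : ∀ (idx : Fin 9) a b, m ≤ a → coeff (dd a b) (h idx) = 0 := by
    intro idx a b ha
    by_contra hne
    have hmem : dd a b ∈ (h idx).support := MvPolynomial.mem_support_iff.2 hne
    have := (MvPolynomial.degreeOf_lt_iff hm).1 (hdeg idx).1 _ hmem
    rw [dd_apply0] at this
    omega
  have hvy : ∀ (idx : Fin 9) a b, n ≤ b → coeff (dd a b) (h idx) = 0 := by
    intro idx a b hb
    by_contra hne
    have hmem : dd a b ∈ (h idx).support := MvPolynomial.mem_support_iff.2 hne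
    have := (MvPolynomial.degreeOf_lt_iff hn).1 (hdeg idx).2 _ hmem
    rw [dd_apply1] at this
    omega
  -- expansion of the syzygy
  have hE : ∑ idx, Tvec m n t idx * h idx =
      Ttilde2 m n t * h 0
      + X 0 ^ m * h 1
      + (X 0 ^ (2*m) * h 2 - h 2)
      + X 1 ^ n * h 3
      + X 0 ^ m * (X 1 ^ n * h 4)
      + (X 0 ^ (2*m) * (X 1 ^ n * h 5) - X 1 ^ n * h 5)
      + (X 1 ^ (2*n) * h 6 - h 6)
      + X 0 ^ m * (X 1 ^ (2*n) * h 7 - h 7)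
      + (X 0 ^ (2*m) * (X 1 ^ (2*n) * h 8 - h 8) - (X 1 ^ (2*n) * h 8 - h 8)) := by
    rw [sum9,
      show Tvec m n t 0 = Ttilde2 m n t from rfl,
      show Tvec m n t 1 = X 0 ^ m from rfl,
      show Tvec m n t 2 = X 0 ^ (2 * m) - 1 from rfl,
      show Tvec m n t 3 = X 1 ^ n from rfl,
      show Tvec m n t 4 = X 0 ^ m * X 1 ^ n from rfl,
      show Tvec m n t 5 = (X 0 ^ (2 * m) - 1) * X 1 ^ n from rfl,
      show Tvec m n t 6 = X 1 ^ (2 * n) - 1 from rfl,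
      show Tvec m n t 7 = X 0 ^ m * (X 1 ^ (2 * n) - 1) from rfl,
      show Tvec m n t 8 = (X 0 ^ (2 * m) - 1) * (X 1 ^ (2 * n) - 1) from rfl]
    ring
  have hsum : Ttilde2 m n t * h 0
      + X 0 ^ m * h 1
      + (X 0 ^ (2*m) * h 2 - h 2)
      + X 1 ^ n * h 3
      + X 0 ^ m * (X 1 ^ n * h 4)
      + (X 0 ^ (2*m) * (X 1 ^ n * h 5) - X 1 ^ n * h 5)
      + (X 1 ^ (2*n) * h 6 - h 6)
      + X 0 ^ m * (X 1 ^ (2*n) * h 7 - h 7)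
      + (X 0 ^ (2*m) * (X 1 ^ (2*n) * h 8 - h 8) - (X 1 ^ (2*n) * h 8 - h 8)) = 0 := by
    rw [← hE]; exact hsyz
  -- Step A : h 0 = 0
  have hTv : ∀ i j : ℕ, i < m → j < n →
      ∑ k ∈ Finset.range m, ∑ l ∈ Finset.range n,
        t ((i : ℤ) - (k : ℤ), (j : ℤ) - (l : ℤ)) * coeff (dd k l) (h 0) = 0 := by
    intro i j hi hj
    rw [← stepA m n hm hn t (h 0) (hvx 0) (hvy 0) i j hi hj]
    have rXa : ∀ (Q : MvPolynomial (Fin 2) K) b, coeff (dd i b) (X 0 ^ m * Q) = 0 :=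
      fun Q b => by rw [keyX0, if_neg (by omega)]
    have rXb : ∀ (Q : MvPolynomial (Fin 2) K) b, coeff (dd i b) (X 0 ^ (2*m) * Q) = 0 :=
      fun Q b => by rw [keyX0, if_neg (by omega)]
    have rXc : ∀ (Q : MvPolynomial (Fin 2) K) b,
        coeff (dd (i + 2*m) b) (X 0 ^ m * Q) = coeff (dd (i + m) b) Q :=
      fun Q b => by rw [keyX0, if_pos (by omega), show i + 2*m - m = i + m by omega]
    have rXd : ∀ (Q : MvPolynomial (Fin 2) K) b,
        coeff (dd (i + 2*m) b) (X 0 ^ (2*m) * Q) = coeff (dd i b) Q :=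
      fun Q b => by rw [keyX0, if_pos (by omega), show i + 2*m - 2*m = i by omega]
    have rYa : ∀ (Q : MvPolynomial (Fin 2) K) a, coeff (dd a j) (X 1 ^ n * Q) = 0 :=
      fun Q a => by rw [keyX1, if_neg (by omega)]
    have rYb : ∀ (Q : MvPolynomial (Fin 2) K) a, coeff (dd a j) (X 1 ^ (2*n) * Q) = 0 :=
      fun Q a => by rw [keyX1, if_neg (by omega)]
    have rYc : ∀ (Q : MvPolynomial (Fin 2) K) a,
        coeff (dd a (j + 2*n)) (X 1 ^ n * Q) = coeff (dd a (j + n)) Q :=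
      fun Q a => by rw [keyX1, if_pos (by omega), show j + 2*n - n = j + n by omega]
    have rYd : ∀ (Q : MvPolynomial (Fin 2) K) a,
        coeff (dd a (j + 2*n)) (X 1 ^ (2*n) * Q) = coeff (dd a j) Q :=
      fun Q a => by rw [keyX1, if_pos (by omega), show j + 2*n - 2*n = j by omega]
    have vX : ∀ (idx : Fin 9) b, coeff (dd (i + m) b) (h idx) = 0 :=
      fun idx b => hvx idx _ _ (by omega)
    have vX2 : ∀ (idx : Fin 9) b, coeff (dd (i + 2*m) b) (h idx) = 0 :=
      fun idx b => hvx idx _ _ (by omega)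
    have vY : ∀ (idx : Fin 9) a, coeff (dd a (j + n)) (h idx) = 0 :=
      fun idx a => hvy idx _ _ (by omega)
    have vY2 : ∀ (idx : Fin 9) a, coeff (dd a (j + 2*n)) (h idx) = 0 :=
      fun idx a => hvy idx _ _ (by omega)
    have Ea := congrArg (coeff (dd i j)) hsum
    have Eb := congrArg (coeff (dd i (j + 2*n))) hsum
    have Ec := congrArg (coeff (dd (i + 2*m) j)) hsum
    have Ed := congrArg (coeff (dd (i + 2*m) (j + 2*n))) hsum
    simp only [coeff_add, coeff_sub, coeff_zero, rXa, rXb, rXc, rXd, rYa, rYb, rYc, rYd,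
      vX, vX2, vY, vY2] at Ea Eb Ec Ed
    linear_combination Ea + Eb + Ec + Ed
  have v0 : ∀ a b : ℕ, a < m → b < n → coeff (dd a b) (h 0) = 0 := by
    intro a b ha hb
    set v : Fin m × Fin n → K := fun β => coeff (dd (β.1 : ℕ) (β.2 : ℕ)) (h 0) with hv
    have hmv : T.mulVec v = 0 := by
      funext α
      have : T.mulVec v α = ∑ x : Fin m, ∑ y : Fin n,
          t ((α.1 : ℤ) - (x : ℤ), (α.2 : ℤ) - (y : ℤ)) * coeff (dd (x : ℕ) (y : ℕ)) (h 0) := by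
        rw [hT]
        simp [Matrix.mulVec, dotProduct, Fintype.sum_prod_type, hv]
      rw [this]
      have := hTv (α.1 : ℕ) (α.2 : ℕ) α.1.isLt α.2.isLt
      rw [Fin.sum_univ_eq_sum_range (fun x => ∑ y : Fin n,
        t (((α.1 : ℕ) : ℤ) - (x : ℤ), ((α.2 : ℕ) : ℤ) - (y : ℤ))
          * coeff (dd x (y : ℕ)) (h 0))]
      rw [Pi.zero_apply]
      rw [← this]
      refine Finset.sum_congr rfl fun k _ => ?_
      exact Fin.sum_univ_eq_sum_range (fun y =>
        t (((α.1 : ℕ) : ℤ) - (k : ℤ), ((α.2 : ℕ) : ℤ) - (y : ℤ)) * coeff (dd k y) (h 0)) n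
    obtain ⟨u, hu⟩ := hTinv
    have h1 : (↑u⁻¹ : Matrix (Fin m × Fin n) (Fin m × Fin n) K) * T = 1 := by
      rw [← hu]
      exact u.inv_mul
    have hv0 : v = 0 := by
      calc v = (1 : Matrix (Fin m × Fin n) (Fin m × Fin n) K).mulVec v :=
              (Matrix.one_mulVec v).symm
        _ = ((↑u⁻¹ : Matrix (Fin m × Fin n) (Fin m × Fin n) K) * T).mulVec v := by rw [h1]
        _ = (↑u⁻¹ : Matrix (Fin m × Fin n) (Fin m × Fin n) K).mulVec (T.mulVec v) :=
              (Matrix.mulVec_mulVec _ _ _).symm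
        _ = 0 := by rw [hmv, Matrix.mulVec_zero]
    have := congrFun hv0 (⟨a, ha⟩, ⟨b, hb⟩)
    simpa [hv] using this
  have h0z : h 0 = 0 := by
    refine eq_zero_of_dd _ fun a b => ?_
    rcases le_or_gt m a with ha | ha
    · exact hvx 0 a b ha
    rcases le_or_gt n b with hb | hb
    · exact hvy 0 a b hb
    exact v0 a b ha hb
  -- Step B : the remaining polynomials vanish
  have hsum2 : X 0 ^ m * h 1
      + (X 0 ^ (2*m) * h 2 - h 2)
      + X 1 ^ n * h 3
      + X 0 ^ m * (X 1 ^ n * h 4)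
      + (X 0 ^ (2*m) * (X 1 ^ n * h 5) - X 1 ^ n * h 5)
      + (X 1 ^ (2*n) * h 6 - h 6)
      + X 0 ^ m * (X 1 ^ (2*n) * h 7 - h 7)
      + (X 0 ^ (2*m) * (X 1 ^ (2*n) * h 8 - h 8) - (X 1 ^ (2*n) * h 8 - h 8)) = 0 := by
    rw [h0z, mul_zero, zero_add] at hsum
    exact hsum
  have main : ∀ k l : ℕ, k < m → l < n →
      coeff (dd k l) (h 1) = 0 ∧ coeff (dd k l) (h 2) = 0 ∧ coeff (dd k l) (h 3) = 0 ∧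
      coeff (dd k l) (h 4) = 0 ∧ coeff (dd k l) (h 5) = 0 ∧ coeff (dd k l) (h 6) = 0 ∧
      coeff (dd k l) (h 7) = 0 ∧ coeff (dd k l) (h 8) = 0 := by
    intro k l hk hl
    have sX0m : ∀ (Q : MvPolynomial (Fin 2) K) b, coeff (dd k b) (X 0 ^ m * Q) = 0 :=
      fun Q b => by rw [keyX0, if_neg (by omega)]
    have sX02m : ∀ (Q : MvPolynomial (Fin 2) K) b, coeff (dd k b) (X 0 ^ (2*m) * Q) = 0 :=
      fun Q b => by rw [keyX0, if_neg (by omega)]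
    have sXmm : ∀ (Q : MvPolynomial (Fin 2) K) b,
        coeff (dd (m + k) b) (X 0 ^ m * Q) = coeff (dd k b) Q :=
      fun Q b => by rw [keyX0, if_pos (by omega), show m + k - m = k by omega]
    have sXm2m : ∀ (Q : MvPolynomial (Fin 2) K) b,
        coeff (dd (m + k) b) (X 0 ^ (2*m) * Q) = 0 :=
      fun Q b => by rw [keyX0, if_neg (by omega)]
    have sX2mm : ∀ (Q : MvPolynomial (Fin 2) K) b,
        coeff (dd (2*m + k) b) (X 0 ^ m * Q) = coeff (dd (m + k) b) Q :=
      fun Q b => by rw [keyX0, if_pos (by omega), show 2*m + k - m = m + k by omega]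
    have sX2m2m : ∀ (Q : MvPolynomial (Fin 2) K) b,
        coeff (dd (2*m + k) b) (X 0 ^ (2*m) * Q) = coeff (dd k b) Q :=
      fun Q b => by rw [keyX0, if_pos (by omega), show 2*m + k - 2*m = k by omega]
    have sY0n : ∀ (Q : MvPolynomial (Fin 2) K) a, coeff (dd a l) (X 1 ^ n * Q) = 0 :=
      fun Q a => by rw [keyX1, if_neg (by omega)]
    have sY02n : ∀ (Q : MvPolynomial (Fin 2) K) a, coeff (dd a l) (X 1 ^ (2*n) * Q) = 0 :=
      fun Q a => by rw [keyX1, if_neg (by omega)]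
    have sYnn : ∀ (Q : MvPolynomial (Fin 2) K) a,
        coeff (dd a (n + l)) (X 1 ^ n * Q) = coeff (dd a l) Q :=
      fun Q a => by rw [keyX1, if_pos (by omega), show n + l - n = l by omega]
    have sYn2n : ∀ (Q : MvPolynomial (Fin 2) K) a,
        coeff (dd a (n + l)) (X 1 ^ (2*n) * Q) = 0 :=
      fun Q a => by rw [keyX1, if_neg (by omega)]
    have sY2nn : ∀ (Q : MvPolynomial (Fin 2) K) a,
        coeff (dd a (2*n + l)) (X 1 ^ n * Q) = coeff (dd a (n + l)) Q :=
      fun Q a => by rw [keyX1, if_pos (by omega), show 2*n + l - n = n + l by omega]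
    have sY2n2n : ∀ (Q : MvPolynomial (Fin 2) K) a,
        coeff (dd a (2*n + l)) (X 1 ^ (2*n) * Q) = coeff (dd a l) Q :=
      fun Q a => by rw [keyX1, if_pos (by omega), show 2*n + l - 2*n = l by omega]
    have vmk : ∀ (idx : Fin 9) b, coeff (dd (m + k) b) (h idx) = 0 :=
      fun idx b => hvx idx _ _ (by omega)
    have v2mk : ∀ (idx : Fin 9) b, coeff (dd (2*m + k) b) (h idx) = 0 :=
      fun idx b => hvx idx _ _ (by omega)
    have vnl : ∀ (idx : Fin 9) a, coeff (dd a (n + l)) (h idx) = 0 :=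
      fun idx a => hvy idx _ _ (by omega)
    have v2nl : ∀ (idx : Fin 9) a, coeff (dd a (2*n + l)) (h idx) = 0 :=
      fun idx a => hvy idx _ _ (by omega)
    have c8 : coeff (dd k l) (h 8) = 0 := by
      have hc := congrArg (coeff (dd (2*m + k) (2*n + l))) hsum2
      simp only [coeff_add, coeff_sub, coeff_zero, sX0m, sX02m, sXmm, sXm2m, sX2mm, sX2m2m,
        sY0n, sY02n, sYnn, sYn2n, sY2nn, sY2n2n, vmk, v2mk, vnl, v2nl] at hc
      linear_combination hc
    have c5 : coeff (dd k l) (h 5) = 0 := by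
      have hc := congrArg (coeff (dd (2*m + k) (n + l))) hsum2
      simp only [coeff_add, coeff_sub, coeff_zero, sX0m, sX02m, sXmm, sXm2m, sX2mm, sX2m2m,
        sY0n, sY02n, sYnn, sYn2n, sY2nn, sY2n2n, vmk, v2mk, vnl, v2nl, c8] at hc
      linear_combination hc
    have c2 : coeff (dd k l) (h 2) = 0 := by
      have hc := congrArg (coeff (dd (2*m + k) l)) hsum2
      simp only [coeff_add, coeff_sub, coeff_zero, sX0m, sX02m, sXmm, sXm2m, sX2mm, sX2m2m,
        sY0n, sY02n, sYnn, sYn2n, sY2nn, sY2n2n, vmk, v2mk, vnl, v2nl, c8] at hc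
      linear_combination hc
    have c7 : coeff (dd k l) (h 7) = 0 := by
      have hc := congrArg (coeff (dd (m + k) (2*n + l))) hsum2
      simp only [coeff_add, coeff_sub, coeff_zero, sX0m, sX02m, sXmm, sXm2m, sX2mm, sX2m2m,
        sY0n, sY02n, sYnn, sYn2n, sY2nn, sY2n2n, vmk, v2mk, vnl, v2nl, c8] at hc
      linear_combination hc
    have c4 : coeff (dd k l) (h 4) = 0 := by
      have hc := congrArg (coeff (dd (m + k) (n + l))) hsum2
      simp only [coeff_add, coeff_sub, coeff_zero, sX0m, sX02m, sXmm, sXm2m, sX2mm, sX2m2m,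
        sY0n, sY02n, sYnn, sYn2n, sY2nn, sY2n2n, vmk, v2mk, vnl, v2nl] at hc
      linear_combination hc
    have c1 : coeff (dd k l) (h 1) = 0 := by
      have hc := congrArg (coeff (dd (m + k) l)) hsum2
      simp only [coeff_add, coeff_sub, coeff_zero, sX0m, sX02m, sXmm, sXm2m, sX2mm, sX2m2m,
        sY0n, sY02n, sYnn, sYn2n, sY2nn, sY2n2n, vmk, v2mk, vnl, v2nl, c7] at hc
      linear_combination hc
    have c6 : coeff (dd k l) (h 6) = 0 := by
      have hc := congrArg (coeff (dd k (2*n + l))) hsum2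
      simp only [coeff_add, coeff_sub, coeff_zero, sX0m, sX02m, sXmm, sXm2m, sX2mm, sX2m2m,
        sY0n, sY02n, sYnn, sYn2n, sY2nn, sY2n2n, vmk, v2mk, vnl, v2nl, c8] at hc
      linear_combination hc
    have c3 : coeff (dd k l) (h 3) = 0 := by
      have hc := congrArg (coeff (dd k (n + l))) hsum2
      simp only [coeff_add, coeff_sub, coeff_zero, sX0m, sX02m, sXmm, sXm2m, sX2mm, sX2m2m,
        sY0n, sY02n, sYnn, sYn2n, sY2nn, sY2n2n, vmk, v2mk, vnl, v2nl, c5] at hc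
      linear_combination hc
    exact ⟨c1, c2, c3, c4, c5, c6, c7, c8⟩
  have call : ∀ (idx : Fin 9) a b, coeff (dd a b) (h idx) = 0 := by
    intro idx a b
    rcases le_or_gt m a with ha | ha
    · exact hvx idx a b ha
    rcases le_or_gt n b with hb | hb
    · exact hvy idx a b hb
    obtain ⟨c1, c2, c3, c4, c5, c6, c7, c8⟩ := main a b ha hb
    have c0 : coeff (dd a b) (h 0) = 0 := v0 a b ha hb
    fin_cases idx
    exacts [c0, c1, c2, c3, c4, c5, c6, c7, c8]
  funext idx
  rw [Pi.zero_apply]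
  exact eq_zero_of_dd _ (call idx)
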